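/- Consider two agents with unit maximum speed evacuating a regular hexagon of circumradius 1 with an exit at an unknown vertex, starting from arbitrary vertices. Any deterministic algorithm has worst-case evacuation time at least 2 + √3. -/

import Mathlib

open Real

/-- The vertices of a regular hexagon of circumradius 1. -/
noncomputable def hexVertex (k : ZMod 6) : ℂ :=
  Complex.exp (((k.val : ℝ) * (π / 3)) * Complex.I)

/-- A deterministic evacuation algorithm for two unit-speed agents on a regular
hexagon of circumradius 1, in the face-to-face communication model.
`base` is the pair of trajectories followed as long as no exit information is
available; `traj e` are the trajectories when the exit is at vertex `e`;
`informedAt e i` is the time agent `i` becomes informed about the exit `e`: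
until then its trajectory agrees with the base trajectory, and at that moment
it is either located at the exit or co-located with an agent informed earlier. -/
structure HexEvacAlgo where
  start : Fin 2 → ZMod 6
  base : Fin 2 → ℝ → ℂ
  traj : ZMod 6 → Fin 2 → ℝ → ℂ
  informedAt : ZMod 6 → Fin 2 → ℝ
  lip_base : ∀ i, LipschitzWith 1 (base i)
  lip_traj : ∀ e i, LipschitzWith 1 (traj e i)
  base_start : ∀ i, base i 0 = hexVertex (start i)
  informed_nonneg : ∀ e i, 0 ≤ informedAt e i
  agree_before : ∀ e i t, t ≤ informedAt e i → traj e i t = base i t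
  informed_reason : ∀ e i,
    traj e i (informedAt e i) = hexVertex e ∨
    ∃ j : Fin 2, j ≠ i ∧ informedAt e j < informedAt e i ∧
      traj e j (informedAt e i) = traj e i (informedAt e i)

set_option maxHeartbeats 1000000

noncomputable def dd (m : ZMod 6) : ℝ :=
  if m = 0 then 0 else if m = 1 ∨ m = 5 then 1 else if m = 3 then 2 else Real.sqrt 3

lemma s3_sq : (Real.sqrt 3)^2 = 3 := Real.sq_sqrt (by norm_num)
lemma s3_lb : (1.7:ℝ) < Real.sqrt 3 := by nlinarith [s3_sq, Real.sqrt_nonneg 3]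
lemma s3_ub : Real.sqrt 3 < (1.8:ℝ) := by nlinarith [s3_sq, Real.sqrt_nonneg 3]

lemma dd0 : dd 0 = 0 := by unfold dd; rw [if_pos rfl]
lemma dd1 : dd 1 = 1 := by unfold dd; rw [if_neg (by decide), if_pos (by decide)]
lemma dd2 : dd 2 = Real.sqrt 3 := by unfold dd; rw [if_neg (by decide), if_neg (by decide), if_neg (by decide)]
lemma dd3 : dd 3 = 2 := by unfold dd; rw [if_neg (by decide), if_neg (by decide), if_pos (by decide)]
lemma dd4 : dd 4 = Real.sqrt 3 := by unfold dd; rw [if_neg (by decide), if_neg (by decide), if_neg (by decide)]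
lemma dd5 : dd 5 = 1 := by unfold dd; rw [if_neg (by decide), if_pos (by decide)]

lemma zmod6_cases : ∀ m : ZMod 6, m = 0 ∨ m = 1 ∨ m = 2 ∨ m = 3 ∨ m = 4 ∨ m = 5 := by decide

lemma dd_nonneg (m : ZMod 6) : 0 ≤ dd m := by
  rcases zmod6_cases m with rfl|rfl|rfl|rfl|rfl|rfl <;>
    simp only [dd0, dd1, dd2, dd3, dd4, dd5] <;> norm_num [Real.sqrt_nonneg]

lemma dd_one_le (m : ZMod 6) (h : m ≠ 0) : 1 ≤ dd m := by
  rcases zmod6_cases m with rfl|rfl|rfl|rfl|rfl|rfl <;>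
    simp only [dd0, dd1, dd2, dd3, dd4, dd5] <;> first
      | (exact absurd rfl h) | norm_num | nlinarith [s3_lb]

lemma dd_lt_one (m : ZMod 6) (h : dd m < 1) : m = 0 := by
  by_contra hm; exact absurd h (not_lt.2 (dd_one_le m hm))

lemma dd_lt_s3 (m : ZMod 6) (h : dd m < Real.sqrt 3) (h0 : m ≠ 0) : m = 1 ∨ m = -1 := by
  rcases zmod6_cases m with rfl|rfl|rfl|rfl|rfl|rfl
  · exact absurd rfl h0
  · left; rfl
  · rw [dd2] at h; exact absurd h (lt_irrefl _)
  · rw [dd3] at h; nlinarith [s3_ub]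
  · rw [dd4] at h; exact absurd h (lt_irrefl _)
  · right; decide

lemma expv (θ : ℝ) : Complex.exp (↑θ * Complex.I) = ↑(Real.cos θ) + ↑(Real.sin θ) * Complex.I := by
  rw [Complex.exp_mul_I, Complex.ofReal_cos, Complex.ofReal_sin]

lemma sqrt_eq_of_sq {x y : ℝ} (hy : 0 ≤ y) (h : y^2 = x) : Real.sqrt x = y := by
  rw [← h]; exact Real.sqrt_sq hy

lemma cdist (a₁ b₁ a₂ b₂ : ℝ) :
    dist ((a₁:ℂ) + (b₁:ℂ)*Complex.I) ((a₂:ℂ) + (b₂:ℂ)*Complex.I)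
      = Real.sqrt ((a₁-a₂)^2 + (b₁-b₂)^2) := by
  rw [Complex.dist_eq, show ((a₁:ℂ) + (b₁:ℂ)*Complex.I - ((a₂:ℂ) + (b₂:ℂ)*Complex.I))
      = ((a₁-a₂:ℝ):ℂ) + ((b₁-b₂:ℝ):ℂ)*Complex.I by push_cast; ring,
    Complex.norm_add_mul_I]
lemma hexv_unfold (k : ZMod 6) :
    hexVertex k = ↑(Real.cos ((k.val : ℝ) * (π/3))) + ↑(Real.sin ((k.val : ℝ) * (π/3))) * Complex.I := by
  rw [← expv]; unfold hexVertex; congr 1; push_cast; ring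

lemma hexv0 : hexVertex 0 = ((1:ℝ):ℂ) + ((0:ℝ):ℂ)*Complex.I := by
  rw [hexv_unfold, show ((0:ZMod 6).val : ℝ) * (π/3) = 0 by rw [show (0:ZMod 6).val = 0 from by decide]; push_cast; ring]
  norm_num
lemma hexv1 : hexVertex 1 = ((1/2:ℝ):ℂ) + ((Real.sqrt 3/2:ℝ):ℂ)*Complex.I := by
  rw [hexv_unfold, show ((1:ZMod 6).val : ℝ) * (π/3) = π/3 by rw [show (1:ZMod 6).val = 1 from by decide]; push_cast; ring,
    Real.cos_pi_div_three, Real.sin_pi_div_three]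
lemma hexv2 : hexVertex 2 = ((-(1/2):ℝ):ℂ) + ((Real.sqrt 3/2:ℝ):ℂ)*Complex.I := by
  rw [hexv_unfold, show ((2:ZMod 6).val : ℝ) * (π/3) = π - π/3 by rw [show (2:ZMod 6).val = 2 from by decide]; push_cast; ring,
    Real.cos_pi_sub, Real.sin_pi_sub, Real.cos_pi_div_three, Real.sin_pi_div_three]
lemma hexv3 : hexVertex 3 = ((-1:ℝ):ℂ) + ((0:ℝ):ℂ)*Complex.I := by
  rw [hexv_unfold, show ((3:ZMod 6).val : ℝ) * (π/3) = π by rw [show (3:ZMod 6).val = 3 from by decide]; push_cast; ring,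
    Real.cos_pi, Real.sin_pi]
lemma hexv4 : hexVertex 4 = ((-(1/2):ℝ):ℂ) + ((-(Real.sqrt 3/2):ℝ):ℂ)*Complex.I := by
  rw [hexv_unfold, show ((4:ZMod 6).val : ℝ) * (π/3) = π + π/3 by rw [show (4:ZMod 6).val = 4 from by decide]; push_cast; ring,
    Real.cos_add, Real.sin_add, Real.cos_pi, Real.sin_pi, Real.cos_pi_div_three, Real.sin_pi_div_three]
  norm_num
lemma hexv5 : hexVertex 5 = ((1/2:ℝ):ℂ) + ((-(Real.sqrt 3/2):ℝ):ℂ)*Complex.I := by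
  rw [hexv_unfold, show ((5:ZMod 6).val : ℝ) * (π/3) = 2*π - π/3 by rw [show (5:ZMod 6).val = 5 from by decide]; push_cast; ring,
    Real.cos_sub, Real.sin_sub, Real.cos_two_pi, Real.sin_two_pi, Real.cos_pi_div_three, Real.sin_pi_div_three]
  norm_num
lemma dvv (j k : ZMod 6) : dist (hexVertex j) (hexVertex k) = dd (j - k) := by
  rcases zmod6_cases j with rfl|rfl|rfl|rfl|rfl|rfl <;> rcases zmod6_cases k with rfl|rfl|rfl|rfl|rfl|rfl
  · rw [hexv0, cdist, show (((0:ZMod 6)) - ((0:ZMod 6))) = (0:ZMod 6) from by decide, dd0]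
    exact sqrt_eq_of_sq (by positivity) (by linear_combination (0/1 : ℝ) * s3_sq)
  · rw [hexv0, hexv1, cdist, show (((0:ZMod 6)) - ((1:ZMod 6))) = (5:ZMod 6) from by decide, dd5]
    exact sqrt_eq_of_sq (by positivity) (by linear_combination (-1/4 : ℝ) * s3_sq)
  · rw [hexv0, hexv2, cdist, show (((0:ZMod 6)) - ((2:ZMod 6))) = (4:ZMod 6) from by decide, dd4]
    exact sqrt_eq_of_sq (by positivity) (by linear_combination (3/4 : ℝ) * s3_sq)
  · rw [hexv0, hexv3, cdist, show (((0:ZMod 6)) - ((3:ZMod 6))) = (3:ZMod 6) from by decide, dd3]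
    exact sqrt_eq_of_sq (by positivity) (by linear_combination (0/1 : ℝ) * s3_sq)
  · rw [hexv0, hexv4, cdist, show (((0:ZMod 6)) - ((4:ZMod 6))) = (2:ZMod 6) from by decide, dd2]
    exact sqrt_eq_of_sq (by positivity) (by linear_combination (3/4 : ℝ) * s3_sq)
  · rw [hexv0, hexv5, cdist, show (((0:ZMod 6)) - ((5:ZMod 6))) = (1:ZMod 6) from by decide, dd1]
    exact sqrt_eq_of_sq (by positivity) (by linear_combination (-1/4 : ℝ) * s3_sq)
  · rw [hexv1, hexv0, cdist, show (((1:ZMod 6)) - ((0:ZMod 6))) = (1:ZMod 6) from by decide, dd1]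
    exact sqrt_eq_of_sq (by positivity) (by linear_combination (-1/4 : ℝ) * s3_sq)
  · rw [hexv1, cdist, show (((1:ZMod 6)) - ((1:ZMod 6))) = (0:ZMod 6) from by decide, dd0]
    exact sqrt_eq_of_sq (by positivity) (by linear_combination (0/1 : ℝ) * s3_sq)
  · rw [hexv1, hexv2, cdist, show (((1:ZMod 6)) - ((2:ZMod 6))) = (5:ZMod 6) from by decide, dd5]
    exact sqrt_eq_of_sq (by positivity) (by linear_combination (0/1 : ℝ) * s3_sq)
  · rw [hexv1, hexv3, cdist, show (((1:ZMod 6)) - ((3:ZMod 6))) = (4:ZMod 6) from by decide, dd4]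
    exact sqrt_eq_of_sq (by positivity) (by linear_combination (3/4 : ℝ) * s3_sq)
  · rw [hexv1, hexv4, cdist, show (((1:ZMod 6)) - ((4:ZMod 6))) = (3:ZMod 6) from by decide, dd3]
    exact sqrt_eq_of_sq (by positivity) (by linear_combination (-1/1 : ℝ) * s3_sq)
  · rw [hexv1, hexv5, cdist, show (((1:ZMod 6)) - ((5:ZMod 6))) = (2:ZMod 6) from by decide, dd2]
    exact sqrt_eq_of_sq (by positivity) (by linear_combination (0/1 : ℝ) * s3_sq)
  · rw [hexv2, hexv0, cdist, show (((2:ZMod 6)) - ((0:ZMod 6))) = (2:ZMod 6) from by decide, dd2]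
    exact sqrt_eq_of_sq (by positivity) (by linear_combination (3/4 : ℝ) * s3_sq)
  · rw [hexv2, hexv1, cdist, show (((2:ZMod 6)) - ((1:ZMod 6))) = (1:ZMod 6) from by decide, dd1]
    exact sqrt_eq_of_sq (by positivity) (by linear_combination (0/1 : ℝ) * s3_sq)
  · rw [hexv2, cdist, show (((2:ZMod 6)) - ((2:ZMod 6))) = (0:ZMod 6) from by decide, dd0]
    exact sqrt_eq_of_sq (by positivity) (by linear_combination (0/1 : ℝ) * s3_sq)
  · rw [hexv2, hexv3, cdist, show (((2:ZMod 6)) - ((3:ZMod 6))) = (5:ZMod 6) from by decide, dd5]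
    exact sqrt_eq_of_sq (by positivity) (by linear_combination (-1/4 : ℝ) * s3_sq)
  · rw [hexv2, hexv4, cdist, show (((2:ZMod 6)) - ((4:ZMod 6))) = (4:ZMod 6) from by decide, dd4]
    exact sqrt_eq_of_sq (by positivity) (by linear_combination (0/1 : ℝ) * s3_sq)
  · rw [hexv2, hexv5, cdist, show (((2:ZMod 6)) - ((5:ZMod 6))) = (3:ZMod 6) from by decide, dd3]
    exact sqrt_eq_of_sq (by positivity) (by linear_combination (-1/1 : ℝ) * s3_sq)
  · rw [hexv3, hexv0, cdist, show (((3:ZMod 6)) - ((0:ZMod 6))) = (3:ZMod 6) from by decide, dd3]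
    exact sqrt_eq_of_sq (by positivity) (by linear_combination (0/1 : ℝ) * s3_sq)
  · rw [hexv3, hexv1, cdist, show (((3:ZMod 6)) - ((1:ZMod 6))) = (2:ZMod 6) from by decide, dd2]
    exact sqrt_eq_of_sq (by positivity) (by linear_combination (3/4 : ℝ) * s3_sq)
  · rw [hexv3, hexv2, cdist, show (((3:ZMod 6)) - ((2:ZMod 6))) = (1:ZMod 6) from by decide, dd1]
    exact sqrt_eq_of_sq (by positivity) (by linear_combination (-1/4 : ℝ) * s3_sq)
  · rw [hexv3, cdist, show (((3:ZMod 6)) - ((3:ZMod 6))) = (0:ZMod 6) from by decide, dd0]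
    exact sqrt_eq_of_sq (by positivity) (by linear_combination (0/1 : ℝ) * s3_sq)
  · rw [hexv3, hexv4, cdist, show (((3:ZMod 6)) - ((4:ZMod 6))) = (5:ZMod 6) from by decide, dd5]
    exact sqrt_eq_of_sq (by positivity) (by linear_combination (-1/4 : ℝ) * s3_sq)
  · rw [hexv3, hexv5, cdist, show (((3:ZMod 6)) - ((5:ZMod 6))) = (4:ZMod 6) from by decide, dd4]
    exact sqrt_eq_of_sq (by positivity) (by linear_combination (3/4 : ℝ) * s3_sq)
  · rw [hexv4, hexv0, cdist, show (((4:ZMod 6)) - ((0:ZMod 6))) = (4:ZMod 6) from by decide, dd4]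
    exact sqrt_eq_of_sq (by positivity) (by linear_combination (3/4 : ℝ) * s3_sq)
  · rw [hexv4, hexv1, cdist, show (((4:ZMod 6)) - ((1:ZMod 6))) = (3:ZMod 6) from by decide, dd3]
    exact sqrt_eq_of_sq (by positivity) (by linear_combination (-1/1 : ℝ) * s3_sq)
  · rw [hexv4, hexv2, cdist, show (((4:ZMod 6)) - ((2:ZMod 6))) = (2:ZMod 6) from by decide, dd2]
    exact sqrt_eq_of_sq (by positivity) (by linear_combination (0/1 : ℝ) * s3_sq)
  · rw [hexv4, hexv3, cdist, show (((4:ZMod 6)) - ((3:ZMod 6))) = (1:ZMod 6) from by decide, dd1]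
    exact sqrt_eq_of_sq (by positivity) (by linear_combination (-1/4 : ℝ) * s3_sq)
  · rw [hexv4, cdist, show (((4:ZMod 6)) - ((4:ZMod 6))) = (0:ZMod 6) from by decide, dd0]
    exact sqrt_eq_of_sq (by positivity) (by linear_combination (0/1 : ℝ) * s3_sq)
  · rw [hexv4, hexv5, cdist, show (((4:ZMod 6)) - ((5:ZMod 6))) = (5:ZMod 6) from by decide, dd5]
    exact sqrt_eq_of_sq (by positivity) (by linear_combination (0/1 : ℝ) * s3_sq)
  · rw [hexv5, hexv0, cdist, show (((5:ZMod 6)) - ((0:ZMod 6))) = (5:ZMod 6) from by decide, dd5]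
    exact sqrt_eq_of_sq (by positivity) (by linear_combination (-1/4 : ℝ) * s3_sq)
  · rw [hexv5, hexv1, cdist, show (((5:ZMod 6)) - ((1:ZMod 6))) = (4:ZMod 6) from by decide, dd4]
    exact sqrt_eq_of_sq (by positivity) (by linear_combination (0/1 : ℝ) * s3_sq)
  · rw [hexv5, hexv2, cdist, show (((5:ZMod 6)) - ((2:ZMod 6))) = (3:ZMod 6) from by decide, dd3]
    exact sqrt_eq_of_sq (by positivity) (by linear_combination (-1/1 : ℝ) * s3_sq)
  · rw [hexv5, hexv3, cdist, show (((5:ZMod 6)) - ((3:ZMod 6))) = (2:ZMod 6) from by decide, dd2]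
    exact sqrt_eq_of_sq (by positivity) (by linear_combination (3/4 : ℝ) * s3_sq)
  · rw [hexv5, hexv4, cdist, show (((5:ZMod 6)) - ((4:ZMod 6))) = (1:ZMod 6) from by decide, dd1]
    exact sqrt_eq_of_sq (by positivity) (by linear_combination (0/1 : ℝ) * s3_sq)
  · rw [hexv5, cdist, show (((5:ZMod 6)) - ((5:ZMod 6))) = (0:ZMod 6) from by decide, dd0]
    exact sqrt_eq_of_sq (by positivity) (by linear_combination (0/1 : ℝ) * s3_sq)
lemma fin2_resolve {a b c : Fin 2} (h1 : a ≠ c) (h2 : b ≠ c) : a = b := by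
  revert h1 h2; revert a b c; decide

lemma hz6 : (6 : ZMod 6) = 0 := by decide

structure Ctx where
  b : Fin 2 → ℝ → ℂ
  u : Fin 2 → ZMod 6
  I : ZMod 6 → Fin 2
  J : ZMod 6 → Fin 2
  S : ZMod 6 → ℝ
  T : ZMod 6 → ℝ
  hIJ : ∀ e, I e ≠ J e
  hS0 : ∀ e, 0 ≤ S e
  hbase : ∀ e, b (I e) (S e) = hexVertex e
  hD1 : ∀ e, dist (b (J e) (T e)) (hexVertex e) ≤ T e - S e
  hD2 : ∀ e, T e + dist (b (J e) (T e)) (hexVertex e) < 2 + Real.sqrt 3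
  hlip : ∀ i s t, dist (b i s) (b i t) ≤ |s - t|
  hu : ∀ i, b i 0 = hexVertex (u i)

namespace Ctx

variable (C : Ctx)

noncomputable def D (e : ZMod 6) : ℝ := dist (C.b (C.J e) (C.T e)) (hexVertex e)

lemma hD0 (e : ZMod 6) : 0 ≤ C.D e := dist_nonneg

lemma hST (e : ZMod 6) : C.S e + C.D e ≤ C.T e := by
  have := C.hD1 e; unfold D; linarith

lemma hTDc (e : ZMod 6) : C.T e + C.D e < 2 + Real.sqrt 3 := C.hD2 e

lemma hSc (e : ZMod 6) : C.S e < 2 + Real.sqrt 3 := by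
  have h1 := C.hST e; have h2 := C.hTDc e; have h3 := C.hD0 e; linarith

lemma H1 (e e' : ZMod 6) (h : C.I e = C.I e') : dd (e - e') ≤ |C.S e - C.S e'| := by
  have heq : dist (hexVertex e) (hexVertex e') = dd (e - e') := dvv e e'
  rw [← heq, ← C.hbase e, ← C.hbase e', ← h]
  exact C.hlip (C.I e) (C.S e) (C.S e')

lemma H2 (e e' : ZMod 6) (h : C.I e' ≠ C.I e) : dd (e - e') ≤ C.D e + |C.T e - C.S e'| := by
  have hJe : C.I e' = C.J e := fin2_resolve h (C.hIJ e).symm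
  have h1 : dist (hexVertex e) (hexVertex e') ≤ C.D e + dist (C.b (C.J e) (C.T e)) (hexVertex e') := by
    have := dist_triangle (hexVertex e) (C.b (C.J e) (C.T e)) (hexVertex e')
    unfold D; rw [dist_comm (hexVertex e)] at this ⊢; linarith [dist_comm (C.b (C.J e) (C.T e)) (hexVertex e)]
  have h2 : dist (C.b (C.J e) (C.T e)) (hexVertex e') ≤ |C.T e - C.S e'| := by
    rw [← C.hbase e', ← hJe]; exact C.hlip _ _ _
  calc dd (e - e') = dist (hexVertex e) (hexVertex e') := (dvv e e').symm
    _ ≤ C.D e + dist (C.b (C.J e) (C.T e)) (hexVertex e') := h1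
    _ ≤ C.D e + |C.T e - C.S e'| := by linarith

lemma H4 (e : ZMod 6) : dd (C.u (C.I e) - e) ≤ C.S e := by
  have h : dist (hexVertex (C.u (C.I e))) (hexVertex e) ≤ |0 - C.S e| := by
    rw [← C.hbase e, ← C.hu (C.I e)]; exact C.hlip _ _ _
  rw [dvv] at h; rw [abs_sub_comm, sub_zero, abs_of_nonneg (C.hS0 e)] at h; exact h

/-- The chain lemma: a late vertex at distance table (2, √3) from a far pair owned by the
other agent yields a contradiction when its time is in [2, 1+√3). -/
lemma chainA (l g₁ g₂ : ZMod 6) (hg : g₁ - g₂ ≠ 0) (hIg : C.I g₁ = C.I g₂)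
    (hIl : C.I l ≠ C.I g₁)
    (d1 : dd (g₁ - l) = 2) (d2 : dd (g₂ - l) = Real.sqrt 3)
    (ha2 : 2 ≤ C.S l) (ha3 : C.S l < 1 + Real.sqrt 3) : False := by
  have s3l := s3_lb; have s3u := s3_ub
  -- g₁ analysis
  have h5 := C.H2 g₁ l hIl
  rw [d1] at h5
  have hT1 := C.hST g₁; have hC1 := C.hTDc g₁; have h01 := C.hS0 g₁; have hD01 := C.hD0 g₁
  have hg1 : C.S g₁ ≤ C.S l - 2 := by
    rcases abs_cases (C.T g₁ - C.S l) with ⟨he, _⟩ | ⟨he, _⟩ <;> rw [he] at h5 <;> linarith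
  have hug : C.u (C.I g₁) = g₁ := by
    have h4 := C.H4 g₁
    have : dd (C.u (C.I g₁) - g₁) < 1 := by linarith
    have := dd_lt_one _ this
    exact sub_eq_zero.mp this
  have hs4 : 1 ≤ C.S g₂ := by
    have h4 := C.H4 g₂
    rw [← hIg, hug] at h4
    have := dd_one_le (g₁ - g₂) hg
    linarith
  have hIl2 : C.I l ≠ C.I g₂ := by rw [← hIg]; exact hIl
  have h6 := C.H2 g₂ l hIl2
  rw [d2] at h6
  have hT2 := C.hST g₂; have hC2 := C.hTDc g₂; have hD02 := C.hD0 g₂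
  rcases abs_cases (C.T g₂ - C.S l) with ⟨he, _⟩ | ⟨he, _⟩ <;> rw [he] at h6 <;> linarith

/-- Dichotomy for the two adjacent late vertices. -/
lemma dich (l l' : ZMod 6) (hI : C.I l ≠ C.I l') (hd : dd (l' - l) = 1)
    (h2 : 2 ≤ C.S l) (h2' : 2 ≤ C.S l') :
    C.S l < 1 + Real.sqrt 3 ∨ C.S l' + 1 ≤ C.S l := by
  have h := C.H2 l' l hI
  rw [hd] at h
  have hT := C.hST l'; have hC := C.hTDc l'; have hD0 := C.hD0 l'
  rcases abs_cases (C.T l' - C.S l) with ⟨he, _⟩ | ⟨he, _⟩ <;> rw [he] at h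
  · left; linarith
  · right; linarith

/-- Two late vertices are adjacent. -/
lemma late_adj (e e' : ZMod 6) (hne : e - e' ≠ 0) (h2 : 2 ≤ C.S e) (h2' : 2 ≤ C.S e') :
    e - e' = 1 ∨ e - e' = -1 := by
  have s3l := s3_lb; have s3u := s3_ub
  have hlt : dd (e - e') < Real.sqrt 3 := by
    by_cases hI : C.I e = C.I e'
    · have h := C.H1 e e' hI
      have h1 := C.hSc e; have h2c := C.hSc e'
      rcases abs_cases (C.S e - C.S e') with ⟨he, _⟩ | ⟨he, _⟩ <;> rw [he] at h <;> linarith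
    · have h := C.H2 e e' (fun hh => hI hh.symm)
      have hT := C.hST e; have hC := C.hTDc e; have hD0 := C.hD0 e
      have hSc' := C.hSc e'
      rcases abs_cases (C.T e - C.S e') with ⟨he, _⟩ | ⟨he, _⟩ <;> rw [he] at h <;> linarith
  exact dd_lt_s3 _ hlt hne

end Ctx
namespace Ctx
variable (C : Ctx)

/-- Subcase B of the 3-3 split. -/
lemma subB (l2 l3 f0 f1 f4 f5 : ZMod 6)
    (hIl : C.I l3 ≠ C.I l2)
    (hI0 : C.I f0 = C.I l3) (hI1 : C.I f1 = C.I l3)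
    (hI4 : C.I f4 = C.I l2) (hI5 : C.I f5 = C.I l2)
    (d31 : dd (l3 - f1) = Real.sqrt 3) (d30 : dd (l3 - f0) = 2) (d10 : dd (f1 - f0) = 1)
    (d23 : dd (l2 - l3) = 1) (d24 : dd (l2 - f4) = Real.sqrt 3) (d25 : dd (l2 - f5) = 2)
    (d54 : dd (f5 - f4) = 1)
    (e0 : C.S f0 < 2) (e1 : C.S f1 < 2) (e4 : C.S f4 < 2) (e5 : C.S f5 < 2)
    (ha : 2 ≤ C.S l2) (hb : 2 ≤ C.S l3) : False := by
  have s3l := s3_lb; have s3u := s3_ub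
  have h00 := C.hS0 f0; have h01 := C.hS0 f1; have h04 := C.hS0 f4; have h05 := C.hS0 f5
  -- b ≥ 1 + √3
  have hb3 : 1 + Real.sqrt 3 ≤ C.S l3 := by
    rcases le_total (C.S f0) (C.S f1) with hc | hc
    · have g1 := C.H1 l3 f1 hI1.symm; rw [d31] at g1
      have g2 := C.H1 f1 f0 (hI1.trans hI0.symm); rw [d10] at g2
      rcases abs_cases (C.S l3 - C.S f1) with ⟨he, _⟩ | ⟨he, _⟩ <;> rw [he] at g1 <;>
      rcases abs_cases (C.S f1 - C.S f0) with ⟨he2, _⟩ | ⟨he2, _⟩ <;> rw [he2] at g2 <;> linarith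
    · have g1 := C.H1 l3 f0 hI0.symm; rw [d30] at g1
      have g2 := C.H1 f1 f0 (hI1.trans hI0.symm); rw [d10] at g2
      rcases abs_cases (C.S l3 - C.S f0) with ⟨he, _⟩ | ⟨he, _⟩ <;> rw [he] at g1 <;>
      rcases abs_cases (C.S f1 - C.S f0) with ⟨he2, _⟩ | ⟨he2, _⟩ <;> rw [he2] at g2 <;> linarith
  -- a < 1 + √3
  have g := C.H2 l2 l3 hIl; rw [d23] at g
  have hT := C.hST l2; have hC := C.hTDc l2; have hD0 := C.hD0 l2
  have hbc := C.hSc l3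
  have ha3 : C.S l2 < 1 + Real.sqrt 3 := by
    rcases abs_cases (C.T l2 - C.S l3) with ⟨he, _⟩ | ⟨he, _⟩ <;> rw [he] at g <;> linarith
  -- P's structure
  rcases le_total (C.S f4) (C.S f5) with hc | hc
  · have g1 := C.H1 l2 f5 hI5.symm; rw [d25] at g1
    have g2 := C.H1 f5 f4 (hI5.trans hI4.symm); rw [d54] at g2
    rcases abs_cases (C.S l2 - C.S f5) with ⟨he, _⟩ | ⟨he, _⟩ <;> rw [he] at g1 <;>
    rcases abs_cases (C.S f5 - C.S f4) with ⟨he2, _⟩ | ⟨he2, _⟩ <;> rw [he2] at g2 <;> linarith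
  · have g1 := C.H1 l2 f4 hI4.symm; rw [d24] at g1
    have g2 := C.H1 f5 f4 (hI5.trans hI4.symm); rw [d54] at g2
    rcases abs_cases (C.S l2 - C.S f4) with ⟨he, _⟩ | ⟨he, _⟩ <;> rw [he] at g1 <;>
    rcases abs_cases (C.S f5 - C.S f4) with ⟨he2, _⟩ | ⟨he2, _⟩ <;> rw [he2] at g2 <;> linarith

/-- Subcase C of the 3-3 split. -/
lemma subC (l2 l3 f0 f4 f1 f5 : ZMod 6)
    (hIl : C.I l3 ≠ C.I l2)
    (hI0 : C.I f0 = C.I l2) (hI4 : C.I f4 = C.I l2)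
    (hI1 : C.I f1 = C.I l3) (hI5 : C.I f5 = C.I l3)
    (d20 : dd (l2 - f0) = Real.sqrt 3) (d24 : dd (l2 - f4) = Real.sqrt 3)
    (d04 : dd (f0 - f4) = Real.sqrt 3)
    (d31 : dd (l3 - f1) = Real.sqrt 3) (d35 : dd (l3 - f5) = Real.sqrt 3)
    (d15 : dd (f1 - f5) = Real.sqrt 3)
    (d23 : dd (l2 - l3) = 1)
    (e0 : C.S f0 < 2) (e4 : C.S f4 < 2) (e1 : C.S f1 < 2) (e5 : C.S f5 < 2)
    (ha : 2 ≤ C.S l2) (hb : 2 ≤ C.S l3) : False := by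
  have s3l := s3_lb; have s3u := s3_ub
  have h00 := C.hS0 f0; have h04 := C.hS0 f4; have h01 := C.hS0 f1; have h05 := C.hS0 f5
  have ha2 : 2 * Real.sqrt 3 ≤ C.S l2 := by
    rcases le_total (C.S f0) (C.S f4) with hc | hc
    · have g1 := C.H1 l2 f4 hI4.symm; rw [d24] at g1
      have g2 := C.H1 f0 f4 (hI0.trans hI4.symm); rw [d04] at g2
      rcases abs_cases (C.S l2 - C.S f4) with ⟨he, _⟩ | ⟨he, _⟩ <;> rw [he] at g1 <;>
      rcases abs_cases (C.S f0 - C.S f4) with ⟨he2, _⟩ | ⟨he2, _⟩ <;> rw [he2] at g2 <;> linarith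
    · have g1 := C.H1 l2 f0 hI0.symm; rw [d20] at g1
      have g2 := C.H1 f0 f4 (hI0.trans hI4.symm); rw [d04] at g2
      rcases abs_cases (C.S l2 - C.S f0) with ⟨he, _⟩ | ⟨he, _⟩ <;> rw [he] at g1 <;>
      rcases abs_cases (C.S f0 - C.S f4) with ⟨he2, _⟩ | ⟨he2, _⟩ <;> rw [he2] at g2 <;> linarith
  have hb2 : 2 * Real.sqrt 3 ≤ C.S l3 := by
    rcases le_total (C.S f1) (C.S f5) with hc | hc
    · have g1 := C.H1 l3 f5 hI5.symm; rw [d35] at g1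
      have g2 := C.H1 f1 f5 (hI1.trans hI5.symm); rw [d15] at g2
      rcases abs_cases (C.S l3 - C.S f5) with ⟨he, _⟩ | ⟨he, _⟩ <;> rw [he] at g1 <;>
      rcases abs_cases (C.S f1 - C.S f5) with ⟨he2, _⟩ | ⟨he2, _⟩ <;> rw [he2] at g2 <;> linarith
    · have g1 := C.H1 l3 f1 hI1.symm; rw [d31] at g1
      have g2 := C.H1 f1 f5 (hI1.trans hI5.symm); rw [d15] at g2
      rcases abs_cases (C.S l3 - C.S f1) with ⟨he, _⟩ | ⟨he, _⟩ <;> rw [he] at g1 <;>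
      rcases abs_cases (C.S f1 - C.S f5) with ⟨he2, _⟩ | ⟨he2, _⟩ <;> rw [he2] at g2 <;> linarith
  have g := C.H2 l2 l3 hIl; rw [d23] at g
  have hT := C.hST l2; have hC := C.hTDc l2; have hD0 := C.hD0 l2
  have hbc := C.hSc l3
  rcases abs_cases (C.T l2 - C.S l3) with ⟨he, _⟩ | ⟨he, _⟩ <;> rw [he] at g <;> linarith

/-- Subcase D of the 3-3 split. -/
lemma subD (l2 l3 f0 f4 f1 f5 : ZMod 6)
    (hIl : C.I l3 ≠ C.I l2)
    (hI1 : C.I f1 = C.I l2) (hI5 : C.I f5 = C.I l2)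
    (hI0 : C.I f0 = C.I l3) (hI4 : C.I f4 = C.I l3)
    (d25 : dd (l2 - f5) = 2) (d21 : dd (l2 - f1) = 1) (d15 : dd (f1 - f5) = Real.sqrt 3)
    (d30 : dd (l3 - f0) = 2) (d34 : dd (l3 - f4) = 1) (d04 : dd (f0 - f4) = Real.sqrt 3)
    (d23 : dd (l2 - l3) = 1)
    (e0 : C.S f0 < 2) (e4 : C.S f4 < 2) (e1 : C.S f1 < 2) (e5 : C.S f5 < 2)
    (ha : 2 ≤ C.S l2) (hb : 2 ≤ C.S l3) : False := by
  have s3l := s3_lb; have s3u := s3_ub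
  have h00 := C.hS0 f0; have h04 := C.hS0 f4; have h01 := C.hS0 f1; have h05 := C.hS0 f5
  have hac := C.hSc l2; have hbc := C.hSc l3
  have ha2 : 1 + Real.sqrt 3 ≤ C.S l2 := by
    rcases le_total (C.S f1) (C.S f5) with hc | hc
    · have g1 := C.H1 l2 f5 hI5.symm; rw [d25] at g1
      have g2 := C.H1 f1 f5 (hI1.trans hI5.symm); rw [d15] at g2
      rcases abs_cases (C.S l2 - C.S f5) with ⟨he, _⟩ | ⟨he, _⟩ <;> rw [he] at g1 <;>
      rcases abs_cases (C.S f1 - C.S f5) with ⟨he2, _⟩ | ⟨he2, _⟩ <;> rw [he2] at g2 <;> linarith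
    · have g1 := C.H1 l2 f1 hI1.symm; rw [d21] at g1
      have g2 := C.H1 f1 f5 (hI1.trans hI5.symm); rw [d15] at g2
      rcases abs_cases (C.S l2 - C.S f1) with ⟨he, _⟩ | ⟨he, _⟩ <;> rw [he] at g1 <;>
      rcases abs_cases (C.S f1 - C.S f5) with ⟨he2, _⟩ | ⟨he2, _⟩ <;> rw [he2] at g2 <;> linarith
  have hb2 : 1 + Real.sqrt 3 ≤ C.S l3 := by
    rcases le_total (C.S f0) (C.S f4) with hc | hc
    · have g1 := C.H1 l3 f4 hI4.symm; rw [d34] at g1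
      have g2 := C.H1 f0 f4 (hI0.trans hI4.symm); rw [d04] at g2
      rcases abs_cases (C.S l3 - C.S f4) with ⟨he, _⟩ | ⟨he, _⟩ <;> rw [he] at g1 <;>
      rcases abs_cases (C.S f0 - C.S f4) with ⟨he2, _⟩ | ⟨he2, _⟩ <;> rw [he2] at g2 <;> linarith
    · have g1 := C.H1 l3 f0 hI0.symm; rw [d30] at g1
      have g2 := C.H1 f0 f4 (hI0.trans hI4.symm); rw [d04] at g2
      rcases abs_cases (C.S l3 - C.S f0) with ⟨he, _⟩ | ⟨he, _⟩ <;> rw [he] at g1 <;>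
      rcases abs_cases (C.S f0 - C.S f4) with ⟨he2, _⟩ | ⟨he2, _⟩ <;> rw [he2] at g2 <;> linarith
  have g := C.H2 l2 l3 hIl; rw [d23] at g
  have hT := C.hST l2; have hC := C.hTDc l2; have hD0 := C.hD0 l2
  rcases abs_cases (C.T l2 - C.S l3) with ⟨he, _⟩ | ⟨he, _⟩ <;> rw [he] at g <;> linarith

end Ctx
lemma dd_eps {ε : ZMod 6} (hε : ε = 1 ∨ ε = -1) :
    dd ε = 1 ∧ dd (2*ε) = Real.sqrt 3 ∧ dd (3*ε) = 2 ∧ dd (4*ε) = Real.sqrt 3 ∧ dd (5*ε) = 1 := by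
  rcases hε with rfl | rfl
  · exact ⟨by rw [show (1:ZMod 6) = 1 from rfl, dd1],
      by rw [show (2*1:ZMod 6) = 2 from by decide, dd2],
      by rw [show (3*1:ZMod 6) = 3 from by decide, dd3],
      by rw [show (4*1:ZMod 6) = 4 from by decide, dd4],
      by rw [show (5*1:ZMod 6) = 5 from by decide, dd5]⟩
  · exact ⟨by rw [show ((-1):ZMod 6) = 5 from by decide, dd5],
      by rw [show (2*(-1):ZMod 6) = 4 from by decide, dd4],
      by rw [show (3*(-1):ZMod 6) = 3 from by decide, dd3],
      by rw [show (4*(-1):ZMod 6) = 2 from by decide, dd2],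
      by rw [show (5*(-1):ZMod 6) = 1 from by decide, dd1]⟩

lemma eps_sq {ε : ZMod 6} (hε : ε = 1 ∨ ε = -1) : ε * ε = 1 := by
  rcases hε with rfl | rfl <;> decide

lemma eps_ne {ε : ZMod 6} (hε : ε = 1 ∨ ε = -1) :
    ε ≠ 0 ∧ 2*ε ≠ 0 ∧ 3*ε ≠ 0 ∧ 4*ε ≠ 0 ∧ 5*ε ≠ 0 := by
  rcases hε with rfl | rfl <;> exact ⟨by decide, by decide, by decide, by decide, by decide⟩

lemma peel (s : Finset (ZMod 6)) (f : ZMod 6 → ℝ) (h : 1 ≤ s.card) :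
    ∃ x ∈ s, (∀ y ∈ s, f x ≤ f y) ∧ (s.erase x).card = s.card - 1 := by
  have hne : s.Nonempty := Finset.card_pos.mp (by omega)
  obtain ⟨x, hx, hmin⟩ := s.exists_min_image f hne
  exact ⟨x, hx, hmin, Finset.card_erase_of_mem hx⟩

namespace Ctx
variable (C : Ctx)

/-- The 4-2 case: some agent witnesses 4 vertices. -/
lemma caseI (A : Fin 2) (hA : (Finset.univ.filter (fun e => C.I e = A)).card = 4) : False := by
  classical
  have s3l := s3_lb; have s3u := s3_ub
  set s : Finset (ZMod 6) := Finset.univ.filter (fun e => C.I e = A) with hs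
  have hmem : ∀ e, e ∈ s ↔ C.I e = A := by intro e; simp [hs]
  obtain ⟨x1, hx1, hmin1, hc1⟩ := peel s C.S (by omega)
  obtain ⟨x2, hx2, hmin2, hc2⟩ := peel (s.erase x1) C.S (by omega)
  obtain ⟨x3, hx3, hmin3, hc3⟩ := peel ((s.erase x1).erase x2) C.S (by omega)
  obtain ⟨x4, hx4, hmin4, hc4⟩ := peel (((s.erase x1).erase x2).erase x3) C.S (by omega)
  -- memberships and distinctness
  have hx2s : x2 ∈ s := Finset.mem_of_mem_erase hx2
  have hx3s' : x3 ∈ s.erase x1 := Finset.mem_of_mem_erase hx3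
  have hx3s : x3 ∈ s := Finset.mem_of_mem_erase hx3s'
  have hx4s'' : x4 ∈ (s.erase x1).erase x2 := Finset.mem_of_mem_erase hx4
  have hx4s' : x4 ∈ s.erase x1 := Finset.mem_of_mem_erase hx4s''
  have hx4s : x4 ∈ s := Finset.mem_of_mem_erase hx4s'
  have n21 : x2 ≠ x1 := Finset.ne_of_mem_erase hx2
  have n31 : x3 ≠ x1 := Finset.ne_of_mem_erase hx3s'
  have n32 : x3 ≠ x2 := Finset.ne_of_mem_erase hx3
  have n41 : x4 ≠ x1 := Finset.ne_of_mem_erase hx4s'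
  have n42 : x4 ≠ x2 := Finset.ne_of_mem_erase hx4s''
  have n43 : x4 ≠ x3 := Finset.ne_of_mem_erase hx4
  -- sortedness
  have o12 : C.S x1 ≤ C.S x2 := hmin1 x2 hx2s
  have o23 : C.S x2 ≤ C.S x3 := hmin2 x3 hx3s'
  have o34 : C.S x3 ≤ C.S x4 := hmin3 x4 hx4s''
  -- gaps
  have g1 : dd (x2 - x1) ≤ C.S x2 - C.S x1 := by
    have := C.H1 x2 x1 (by rw [(hmem x2).mp hx2s, (hmem x1).mp hx1])
    rwa [abs_of_nonneg (by linarith)] at this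
  have g2 : dd (x3 - x2) ≤ C.S x3 - C.S x2 := by
    have := C.H1 x3 x2 (by rw [(hmem x3).mp hx3s, (hmem x2).mp hx2s])
    rwa [abs_of_nonneg (by linarith)] at this
  have g3 : dd (x4 - x3) ≤ C.S x4 - C.S x3 := by
    have := C.H1 x4 x3 (by rw [(hmem x4).mp hx4s, (hmem x3).mp hx3s])
    rwa [abs_of_nonneg (by linarith)] at this
  have l1 : 1 ≤ dd (x2 - x1) := dd_one_le _ (sub_ne_zero.mpr n21)
  have l2 : 1 ≤ dd (x3 - x2) := dd_one_le _ (sub_ne_zero.mpr n32)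
  have l3 : 1 ≤ dd (x4 - x3) := dd_one_le _ (sub_ne_zero.mpr n43)
  have hS1 := C.hS0 x1
  have hS4 := C.hSc x4
  -- each step is short
  have st1 : x2 - x1 = 1 ∨ x2 - x1 = -1 :=
    dd_lt_s3 _ (by linarith) (sub_ne_zero.mpr n21)
  have st2 : x3 - x2 = 1 ∨ x3 - x2 = -1 :=
    dd_lt_s3 _ (by linarith) (sub_ne_zero.mpr n32)
  have st3 : x4 - x3 = 1 ∨ x4 - x3 = -1 :=
    dd_lt_s3 _ (by linarith) (sub_ne_zero.mpr n43)
  -- monotone direction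
  have hstep2 : x3 - x2 = x2 - x1 := by
    rcases st1 with h1 | h1 <;> rcases st2 with h2 | h2 <;> rw [h1, h2]
    · exact absurd (show x3 = x1 by linear_combination h1 + h2) n31
    · exact absurd (show x3 = x1 by linear_combination h1 + h2) n31
  have hstep3 : x4 - x3 = x2 - x1 := by
    rcases st1 with h1 | h1 <;> rcases st3 with h3 | h3 <;> rw [h1, h3]
    · exact absurd (show x4 = x2 by linear_combination hstep2 + h1 + h3) n42
    · exact absurd (show x4 = x2 by linear_combination hstep2 + h1 + h3) n42
  set ε := x2 - x1 with hεd
  have hε : ε = 1 ∨ ε = -1 := st1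
  obtain ⟨dde1, dde2, dde3, dde4, dde5⟩ := dd_eps hε
  obtain ⟨ne1, ne2, ne3, ne4, ne5⟩ := eps_ne hε
  -- identify positions
  have p2 : x2 = x1 + ε := by rw [hεd]; ring
  have p3 : x3 = x1 + 2*ε := by linear_combination hstep2 + 2*hεd
  have p4 : x4 = x1 + 3*ε := by linear_combination hstep3 + hstep2 + 3*hεd
  -- the other two vertices
  have hcompl : ∀ w, w ∈ s → w = x1 ∨ w = x2 ∨ w = x3 ∨ w = x4 := by
    intro w hw
    have hsub : ({x1, x2, x3, x4} : Finset (ZMod 6)) ⊆ s := by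
      intro z hz; simp only [Finset.mem_insert, Finset.mem_singleton] at hz
      rcases hz with rfl|rfl|rfl|rfl <;> assumption
    have hcard : ({x1, x2, x3, x4} : Finset (ZMod 6)).card = 4 := by
      rw [Finset.card_insert_of_notMem (by simp [n21.symm, n31.symm, n41.symm]),
        Finset.card_insert_of_notMem (by simp [n32.symm, n42.symm]),
        Finset.card_insert_of_notMem (by simp [n43.symm]), Finset.card_singleton]
    have : s = ({x1, x2, x3, x4} : Finset (ZMod 6)) :=
      (Finset.eq_of_subset_of_card_le hsub (by omega)).symm
    rw [this] at hw; simpa using hw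
  have hI4 : C.I (x1 + 4*ε) ≠ A := by
    intro hI
    rcases hcompl _ ((hmem _).mpr hI) with h|h|h|h
    · rw [p4] at n41  -- dummy to keep names; real work below
      exact absurd (show (4*ε : ZMod 6) = 0 by linear_combination h) ne4
    · exact absurd (show (3*ε : ZMod 6) = 0 by linear_combination h + p2) ne3
    · exact absurd (show (2*ε : ZMod 6) = 0 by linear_combination h + p3) ne2
    · exact absurd (show (ε : ZMod 6) = 0 by linear_combination h + p4) ne1
  have hI5 : C.I (x1 + 5*ε) ≠ A := by
    intro hI
    rcases hcompl _ ((hmem _).mpr hI) with h|h|h|h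
    · exact absurd (show (5*ε : ZMod 6) = 0 by linear_combination h) ne5
    · exact absurd (show (4*ε : ZMod 6) = 0 by linear_combination h + p2) ne4
    · exact absurd (show (3*ε : ZMod 6) = 0 by linear_combination h + p3) ne3
    · exact absurd (show (2*ε : ZMod 6) = 0 by linear_combination h + p4) ne2
  -- apply chainA with l := x3, g₁ := x1 + 5ε, g₂ := x1 + 4ε
  have hIx3 : C.I x3 = A := (hmem x3).mp hx3s
  refine C.chainA x3 (x1 + 5*ε) (x1 + 4*ε) ?_ ?_ ?_ ?_ ?_ ?_ ?_
  · show (x1 + 5*ε) - (x1 + 4*ε) ≠ 0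
    rw [show (x1 + 5*ε) - (x1 + 4*ε) = ε by ring]; exact ne1
  · exact fin2_resolve hI5 hI4
  · rw [hIx3]; exact fun h => hI5 h.symm
  · rw [show (x1 + 5*ε) - x3 = 3*ε by rw [p3]; ring]; exact dde3
  · rw [show (x1 + 4*ε) - x3 = 2*ε by rw [p3]; ring]; exact dde2
  · -- 2 ≤ S x3
    linarith
  · -- S x3 < 1 + √3
    linarith

end Ctx
namespace Ctx
variable (C : Ctx)

/-- Subcase A of the 3-3 split. -/
lemma subA (l2 l3 g0 g1 g4 g5 : ZMod 6)
    (hI23 : C.I l3 ≠ C.I l2)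
    (hI0 : C.I g0 = C.I l2) (hI1 : C.I g1 = C.I l2)
    (hI4 : C.I g4 = C.I l3) (hI5 : C.I g5 = C.I l3)
    (hg54 : g5 - g4 ≠ 0) (hg01 : g0 - g1 ≠ 0)
    (d32 : dd (l3 - l2) = 1) (d23 : dd (l2 - l3) = 1)
    (d52 : dd (g5 - l2) = 2) (d42 : dd (g4 - l2) = Real.sqrt 3)
    (d03 : dd (g0 - l3) = 2) (d13 : dd (g1 - l3) = Real.sqrt 3)
    (ha : 2 ≤ C.S l2) (hb : 2 ≤ C.S l3) : False := by
  rcases C.dich l2 l3 (fun h => hI23 h.symm) d32 ha hb with h | h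
  · exact C.chainA l2 g5 g4 hg54 (hI5.trans hI4.symm)
      (by rw [hI5]; exact fun hh => hI23 hh.symm) d52 d42 ha h
  · rcases C.dich l3 l2 hI23 d23 hb ha with h2 | h2
    · exact C.chainA l3 g0 g1 hg01 (hI0.trans hI1.symm)
        (by rw [hI0]; exact hI23) d03 d13 hb h2
    · linarith

end Ctx
namespace Ctx
variable (C : Ctx)

set_option maxHeartbeats 2000000 in
/-- The 3-3 case. -/
lemma case33 (h0 : (Finset.univ.filter (fun e => C.I e = 0)).card = 3)
    (h1 : (Finset.univ.filter (fun e => C.I e = 1)).card = 3) : False := by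
  classical
  have s3l := s3_lb; have s3u := s3_ub
  set s : Finset (ZMod 6) := Finset.univ.filter (fun e => C.I e = 0) with hs
  set t : Finset (ZMod 6) := Finset.univ.filter (fun e => C.I e = 1) with ht
  have hmems : ∀ e, e ∈ s ↔ C.I e = 0 := by intro e; simp [hs]
  have hmemt : ∀ e, e ∈ t ↔ C.I e = 1 := by intro e; simp [ht]
  obtain ⟨x1, hx1, hminx1, hcx1⟩ := peel s C.S (by omega)
  obtain ⟨x2, hx2, hminx2, hcx2⟩ := peel (s.erase x1) C.S (by omega)
  obtain ⟨x3, hx3, hminx3, hcx3⟩ := peel ((s.erase x1).erase x2) C.S (by omega)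
  obtain ⟨y1, hy1, hminy1, hcy1⟩ := peel t C.S (by omega)
  obtain ⟨y2, hy2, hminy2, hcy2⟩ := peel (t.erase y1) C.S (by omega)
  obtain ⟨y3, hy3, hminy3, hcy3⟩ := peel ((t.erase y1).erase y2) C.S (by omega)
  have hx2s : x2 ∈ s := Finset.mem_of_mem_erase hx2
  have hx3s' : x3 ∈ s.erase x1 := Finset.mem_of_mem_erase hx3
  have hx3s : x3 ∈ s := Finset.mem_of_mem_erase hx3s'
  have hy2t : y2 ∈ t := Finset.mem_of_mem_erase hy2
  have hy3t' : y3 ∈ t.erase y1 := Finset.mem_of_mem_erase hy3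
  have hy3t : y3 ∈ t := Finset.mem_of_mem_erase hy3t'
  have nx21 : x2 ≠ x1 := Finset.ne_of_mem_erase hx2
  have nx31 : x3 ≠ x1 := Finset.ne_of_mem_erase hx3s'
  have nx32 : x3 ≠ x2 := Finset.ne_of_mem_erase hx3
  have ny21 : y2 ≠ y1 := Finset.ne_of_mem_erase hy2
  have ny31 : y3 ≠ y1 := Finset.ne_of_mem_erase hy3t'
  have ny32 : y3 ≠ y2 := Finset.ne_of_mem_erase hy3
  have hIx1 : C.I x1 = 0 := (hmems x1).mp hx1
  have hIx2 : C.I x2 = 0 := (hmems x2).mp hx2s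
  have hIx3 : C.I x3 = 0 := (hmems x3).mp hx3s
  have hIy1 : C.I y1 = 1 := (hmemt y1).mp hy1
  have hIy2 : C.I y2 = 1 := (hmemt y2).mp hy2t
  have hIy3 : C.I y3 = 1 := (hmemt y3).mp hy3t
  -- sortedness
  have ox12 : C.S x1 ≤ C.S x2 := hminx1 x2 hx2s
  have ox23 : C.S x2 ≤ C.S x3 := hminx2 x3 hx3s'
  have oy12 : C.S y1 ≤ C.S y2 := hminy1 y2 hy2t
  have oy23 : C.S y2 ≤ C.S y3 := hminy2 y3 hy3t'
  -- completeness
  have hcomp0 : ∀ w, C.I w = 0 → w = x1 ∨ w = x2 ∨ w = x3 := by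
    intro w hw
    have hsub : ({x1, x2, x3} : Finset (ZMod 6)) ⊆ s := by
      intro z hz; simp only [Finset.mem_insert, Finset.mem_singleton] at hz
      rcases hz with rfl|rfl|rfl <;> assumption
    have hcard : ({x1, x2, x3} : Finset (ZMod 6)).card = 3 := by
      rw [Finset.card_insert_of_notMem (by simp [nx21.symm, nx31.symm]),
        Finset.card_insert_of_notMem (by simp [nx32.symm]), Finset.card_singleton]
    have hse : s = ({x1, x2, x3} : Finset (ZMod 6)) :=
      (Finset.eq_of_subset_of_card_le hsub (by omega)).symm
    have : w ∈ s := (hmems w).mpr hw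
    rw [hse] at this; simpa using this
  have hcomp1 : ∀ w, C.I w = 1 → w = y1 ∨ w = y2 ∨ w = y3 := by
    intro w hw
    have hsub : ({y1, y2, y3} : Finset (ZMod 6)) ⊆ t := by
      intro z hz; simp only [Finset.mem_insert, Finset.mem_singleton] at hz
      rcases hz with rfl|rfl|rfl <;> assumption
    have hcard : ({y1, y2, y3} : Finset (ZMod 6)).card = 3 := by
      rw [Finset.card_insert_of_notMem (by simp [ny21.symm, ny31.symm]),
        Finset.card_insert_of_notMem (by simp [ny32.symm]), Finset.card_singleton]
    have hte : t = ({y1, y2, y3} : Finset (ZMod 6)) :=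
      (Finset.eq_of_subset_of_card_le hsub (by omega)).symm
    have : w ∈ t := (hmemt w).mpr hw
    rw [hte] at this; simpa using this
  have hfin2 : ∀ a : Fin 2, a ≠ 0 → a = 1 := by decide
  have hne01 : (0 : Fin 2) ≠ 1 := by decide
  have cr : ∀ {w w' : ZMod 6}, C.I w = 0 → C.I w' = 1 → w ≠ w' := by
    intro w w' hw hw' h; rw [h, hw'] at hw; exact hne01 hw.symm
  -- gaps and lateness
  have gx1 : 1 ≤ C.S x2 - C.S x1 := by
    have := C.H1 x2 x1 (hIx2.trans hIx1.symm)
    have hl := dd_one_le (x2 - x1) (sub_ne_zero.mpr nx21)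
    rw [abs_of_nonneg (by linarith)] at this; linarith
  have gx2 : 1 ≤ C.S x3 - C.S x2 := by
    have := C.H1 x3 x2 (hIx3.trans hIx2.symm)
    have hl := dd_one_le (x3 - x2) (sub_ne_zero.mpr nx32)
    rw [abs_of_nonneg (by linarith)] at this; linarith
  have gy1 : 1 ≤ C.S y2 - C.S y1 := by
    have := C.H1 y2 y1 (hIy2.trans hIy1.symm)
    have hl := dd_one_le (y2 - y1) (sub_ne_zero.mpr ny21)
    rw [abs_of_nonneg (by linarith)] at this; linarith
  have gy2 : 1 ≤ C.S y3 - C.S y2 := by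
    have := C.H1 y3 y2 (hIy3.trans hIy2.symm)
    have hl := dd_one_le (y3 - y2) (sub_ne_zero.mpr ny32)
    rw [abs_of_nonneg (by linarith)] at this; linarith
  have hS0x1 := C.hS0 x1; have hS0y1 := C.hS0 y1
  have ha : 2 ≤ C.S x3 := by linarith
  have hb : 2 ≤ C.S y3 := by linarith
  have nxy33 : y3 ≠ x3 := (cr hIx3 hIy3).symm
  -- the two late vertices are adjacent
  have hεor := C.late_adj y3 x3 (sub_ne_zero.mpr nxy33) hb ha
  set ε := y3 - x3 with hεdef
  have hε : ε = 1 ∨ ε = -1 := hεor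
  obtain ⟨dde1, dde2, dde3, dde4, dde5⟩ := dd_eps hε
  obtain ⟨ne1, ne2, ne3, ne4, ne5⟩ := eps_ne hε
  have heps2 : ε * ε = 1 := eps_sq hε
  -- x2 and y2 are early
  have hex2 : C.S x2 < 2 := by
    by_contra hcon
    push_neg at hcon
    have m1 := C.late_adj x3 x2 (sub_ne_zero.mpr nx32) ha hcon
    have m2 := C.late_adj y3 x2 (sub_ne_zero.mpr ((cr hIx2 hIy3).symm)) hb hcon
    rcases m1 with h1|h1 <;> rcases m2 with h2|h2 <;> rcases hε with h3|h3
    · exact absurd (show (0:ZMod 6) = -1 by linear_combination h2 - h1 - h3 + hεdef) (by decide)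
    · exact absurd (show (0:ZMod 6) = 1 by linear_combination h2 - h1 - h3 + hεdef) (by decide)
    · exact absurd (show (0:ZMod 6) = -3 by linear_combination h2 - h1 - h3 + hεdef) (by decide)
    · exact absurd (show (0:ZMod 6) = -1 by linear_combination h2 - h1 - h3 + hεdef) (by decide)
    · exact absurd (show (0:ZMod 6) = 1 by linear_combination h2 - h1 - h3 + hεdef) (by decide)
    · exact absurd (show (0:ZMod 6) = 3 by linear_combination h2 - h1 - h3 + hεdef) (by decide)
    · exact absurd (show (0:ZMod 6) = -1 by linear_combination h2 - h1 - h3 + hεdef) (by decide)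
    · exact absurd (show (0:ZMod 6) = 1 by linear_combination h2 - h1 - h3 + hεdef) (by decide)
  have hey2 : C.S y2 < 2 := by
    by_contra hcon
    push_neg at hcon
    have m1 := C.late_adj y3 y2 (sub_ne_zero.mpr ny32) hb hcon
    have m2 := C.late_adj x3 y2 (sub_ne_zero.mpr ((cr hIx3 hIy2))) ha hcon
    rcases m1 with h1|h1 <;> rcases m2 with h2|h2 <;> rcases hε with h3|h3
    · exact absurd (show (0:ZMod 6) = -1 by linear_combination h1 - h2 - h3 + hεdef) (by decide)
    · exact absurd (show (0:ZMod 6) = 1 by linear_combination h1 - h2 - h3 + hεdef) (by decide)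
    · exact absurd (show (0:ZMod 6) = 1 by linear_combination h1 - h2 - h3 + hεdef) (by decide)
    · exact absurd (show (0:ZMod 6) = 3 by linear_combination h1 - h2 - h3 + hεdef) (by decide)
    · exact absurd (show (0:ZMod 6) = -3 by linear_combination h1 - h2 - h3 + hεdef) (by decide)
    · exact absurd (show (0:ZMod 6) = -1 by linear_combination h1 - h2 - h3 + hεdef) (by decide)
    · exact absurd (show (0:ZMod 6) = -1 by linear_combination h1 - h2 - h3 + hεdef) (by decide)
    · exact absurd (show (0:ZMod 6) = 1 by linear_combination h1 - h2 - h3 + hεdef) (by decide)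
  have hex1 : C.S x1 < 2 := by linarith
  have hey1 : C.S y1 < 2 := by linarith
  -- frame facts
  have heps2 : ε * ε = 1 := eps_sq hε
  have hIl : C.I y3 ≠ C.I x3 := by rw [hIy3, hIx3]; exact fun hh => hne01 hh.symm
  have dyx : dd (y3 - x3) = 1 := by rw [show y3 - x3 = ε from hεdef.symm]; exact dde1
  have dxy : dd (x3 - y3) = 1 := by rw [show x3 - y3 = 5*ε by linear_combination hεdef - ε * hz6]; exact dde5
  have dx2 : dd ((x3+2*ε) - x3) = Real.sqrt 3 := by rw [show (x3+2*ε) - x3 = 2*ε by ring]; exact dde2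
  have dx3 : dd ((x3+3*ε) - x3) = 2 := by rw [show (x3+3*ε) - x3 = 3*ε by ring]; exact dde3
  have dxr2 : dd (x3 - (x3+2*ε)) = Real.sqrt 3 := by rw [show x3 - (x3+2*ε) = 4*ε by linear_combination - ε * hz6]; exact dde4
  have dxr3 : dd (x3 - (x3+3*ε)) = 2 := by rw [show x3 - (x3+3*ε) = 3*ε by linear_combination - ε * hz6]; exact dde3
  have dxr4 : dd (x3 - (x3+4*ε)) = Real.sqrt 3 := by rw [show x3 - (x3+4*ε) = 2*ε by linear_combination - ε * hz6]; exact dde2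
  have dxr5 : dd (x3 - (x3+5*ε)) = 1 := by rw [show x3 - (x3+5*ε) = ε by linear_combination - ε * hz6]; exact dde1
  have dy4 : dd ((x3+4*ε) - y3) = 2 := by rw [show (x3+4*ε) - y3 = 3*ε by linear_combination hεdef]; exact dde3
  have dy5 : dd ((x3+5*ε) - y3) = Real.sqrt 3 := by rw [show (x3+5*ε) - y3 = 4*ε by linear_combination hεdef]; exact dde4
  have dyr2 : dd (y3 - (x3+2*ε)) = 1 := by rw [show y3 - (x3+2*ε) = 5*ε by linear_combination - hεdef - ε * hz6]; exact dde5
  have dyr3 : dd (y3 - (x3+3*ε)) = Real.sqrt 3 := by rw [show y3 - (x3+3*ε) = 4*ε by linear_combination - hεdef - ε * hz6]; exact dde4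
  have dyr4 : dd (y3 - (x3+4*ε)) = 2 := by rw [show y3 - (x3+4*ε) = 3*ε by linear_combination - hεdef - ε * hz6]; exact dde3
  have dyr5 : dd (y3 - (x3+5*ε)) = Real.sqrt 3 := by rw [show y3 - (x3+5*ε) = 2*ε by linear_combination - hεdef - ε * hz6]; exact dde2
  have ds54 : dd ((x3+5*ε) - (x3+4*ε)) = 1 := by rw [show (x3+5*ε) - (x3+4*ε) = ε by ring]; exact dde1
  have ds32 : dd ((x3+3*ε) - (x3+2*ε)) = 1 := by rw [show (x3+3*ε) - (x3+2*ε) = ε by ring]; exact dde1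
  have ds42 : dd ((x3+4*ε) - (x3+2*ε)) = Real.sqrt 3 := by rw [show (x3+4*ε) - (x3+2*ε) = 2*ε by ring]; exact dde2
  have ds53 : dd ((x3+5*ε) - (x3+3*ε)) = Real.sqrt 3 := by rw [show (x3+5*ε) - (x3+3*ε) = 2*ε by ring]; exact dde2
  have ds52 : dd ((x3+5*ε) - (x3+2*ε)) = 2 := by rw [show (x3+5*ε) - (x3+2*ε) = 3*ε by ring]; exact dde3
  have ds25 : dd ((x3+2*ε) - (x3+5*ε)) = 2 := by rw [show (x3+2*ε) - (x3+5*ε) = 3*ε by linear_combination - ε * hz6]; exact dde3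
  have ng54 : (x3+3*ε) - (x3+2*ε) ≠ 0 := by rw [show (x3+3*ε) - (x3+2*ε) = ε by ring]; exact ne1
  have ng01 : (x3+4*ε) - (x3+5*ε) ≠ 0 := by rw [show (x3+4*ε) - (x3+5*ε) = 5*ε by linear_combination - ε * hz6]; exact ne5
  have nsx2 : (x3+2*ε) ≠ x3 := fun hh => ne2 (by linear_combination hh)
  have nsy2 : (x3+2*ε) ≠ y3 := fun hh => ne1 (by linear_combination hh - hεdef)
  have nsx3 : (x3+3*ε) ≠ x3 := fun hh => ne3 (by linear_combination hh)
  have nsy3 : (x3+3*ε) ≠ y3 := fun hh => ne2 (by linear_combination hh - hεdef)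
  have nsx4 : (x3+4*ε) ≠ x3 := fun hh => ne4 (by linear_combination hh)
  have nsy4 : (x3+4*ε) ≠ y3 := fun hh => ne3 (by linear_combination hh - hεdef)
  have nsx5 : (x3+5*ε) ≠ x3 := fun hh => ne5 (by linear_combination hh)
  have nsy5 : (x3+5*ε) ≠ y3 := fun hh => ne4 (by linear_combination hh - hεdef)
  have hside : ∀ w, w ≠ x3 → w ≠ y3 → C.S w < 2 := by
    intro w hwx hwy
    by_cases hIw : C.I w = 0
    · rcases hcomp0 w hIw with rfl|rfl|rfl
      · linarith
      · exact hex2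
      · exact absurd rfl hwx
    · rcases hcomp1 w (hfin2 _ hIw) with rfl|rfl|rfl
      · linarith
      · exact hey2
      · exact absurd rfl hwy
  have es2 : C.S (x3+2*ε) < 2 := hside _ nsx2 nsy2
  have es3 : C.S (x3+3*ε) < 2 := hside _ nsx3 nsy3
  have es4 : C.S (x3+4*ε) < 2 := hside _ nsx4 nsy4
  have es5 : C.S (x3+5*ε) < 2 := hside _ nsx5 nsy5
  have hIw1 : ∀ w, w ≠ x1 → w ≠ x2 → w ≠ x3 → C.I w = 1 := by
    intro w a bb c
    by_cases hIw : C.I w = 0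
    · rcases hcomp0 w hIw with rfl|rfl|rfl
      · exact absurd rfl a
      · exact absurd rfl bb
      · exact absurd rfl c
    · exact hfin2 _ hIw
  have hcov : ∀ w : ZMod 6, w = x3 ∨ w = y3 ∨ w = x3+2*ε ∨ w = x3+3*ε ∨ w = x3+4*ε ∨ w = x3+5*ε := by
    intro w
    rcases zmod6_cases (ε*(w - x3)) with h|h|h|h|h|h
    · exact Or.inl (by linear_combination ε*h - (w-x3)*heps2)
    · exact Or.inr (Or.inl (by linear_combination ε*h - (w-x3)*heps2 + hεdef))
    · exact Or.inr (Or.inr (Or.inl (by linear_combination ε*h - (w-x3)*heps2)))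
    · exact Or.inr (Or.inr (Or.inr (Or.inl (by linear_combination ε*h - (w-x3)*heps2))))
    · exact Or.inr (Or.inr (Or.inr (Or.inr (Or.inl (by linear_combination ε*h - (w-x3)*heps2)))))
    · exact Or.inr (Or.inr (Or.inr (Or.inr (Or.inr (by linear_combination ε*h - (w-x3)*heps2)))))
  rcases hcov x1 with h1|h1|h1|h1|h1|h1
  · exact nx31 h1.symm
  · exact cr hIx1 hIy3 h1
  · -- x1 = slot 2
    rcases hcov x2 with h2|h2|h2|h2|h2|h2
    · exact nx32 h2.symm
    · exact cr hIx2 hIy3 h2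
    · exact nx21 (h2.trans h1.symm)
    · -- x2 = slot 3
      exact C.subB x3 y3 (x3+4*ε) (x3+5*ε) (x3+2*ε) (x3+3*ε) hIl (by rw [hIy3]; exact hIw1 _ (fun hh => ne2 (by linear_combination hh + h1)) (fun hh => ne1 (by linear_combination hh + h2)) nsx4) (by rw [hIy3]; exact hIw1 _ (fun hh => ne3 (by linear_combination hh + h1)) (fun hh => ne2 (by linear_combination hh + h2)) nsx5) (by rw [← h1, hIx1, hIx3]) (by rw [← h2, hIx2, hIx3]) dyr5 dyr4 ds54 dxy dxr2 dxr3 ds32 es4 es5 es2 es3 ha hb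
    · -- x2 = slot 4
      exact C.subC x3 y3 (x3+4*ε) (x3+2*ε) (x3+5*ε) (x3+3*ε) hIl (by rw [← h2, hIx2, hIx3]) (by rw [← h1, hIx1, hIx3]) (by rw [hIy3]; exact hIw1 _ (fun hh => ne3 (by linear_combination hh + h1)) (fun hh => ne1 (by linear_combination hh + h2)) nsx5) (by rw [hIy3]; exact hIw1 _ (fun hh => ne1 (by linear_combination hh + h1)) (fun hh => ne5 (by linear_combination hh + h2 + ε * hz6)) nsx3) dxr4 dxr2 ds42 dyr5 dyr3 ds53 dxy es4 es2 es5 es3 ha hb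
    · -- x2 = slot 5
      have hdd : dd (x2 - x1) = 2 := by
        rw [h2, h1, show (x3+5*ε) - (x3+2*ε) = 3*ε by ring]; exact dde3
      have hH := C.H1 x2 x1 (hIx2.trans hIx1.symm)
      rw [hdd, abs_of_nonneg (by linarith)] at hH
      linarith
  · -- x1 = slot 3
    rcases hcov x2 with h2|h2|h2|h2|h2|h2
    · exact nx32 h2.symm
    · exact cr hIx2 hIy3 h2
    · -- x2 = slot 2
      exact C.subB x3 y3 (x3+4*ε) (x3+5*ε) (x3+2*ε) (x3+3*ε) hIl (by rw [hIy3]; exact hIw1 _ (fun hh => ne1 (by linear_combination hh + h1)) (fun hh => ne2 (by linear_combination hh + h2)) nsx4) (by rw [hIy3]; exact hIw1 _ (fun hh => ne2 (by linear_combination hh + h1)) (fun hh => ne3 (by linear_combination hh + h2)) nsx5) (by rw [← h2, hIx2, hIx3]) (by rw [← h1, hIx1, hIx3]) dyr5 dyr4 ds54 dxy dxr2 dxr3 ds32 es4 es5 es2 es3 ha hb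
    · exact nx21 (h2.trans h1.symm)
    · -- x2 = slot 4
      have hIa : C.I (x3+5*ε) = 1 := hIw1 _ (fun hh => ne2 (by linear_combination hh + h1)) (fun hh => ne1 (by linear_combination hh + h2)) nsx5
      have hIb : C.I (x3+2*ε) = 1 := hIw1 _ (fun hh => ne5 (by linear_combination hh + h1 + ε * hz6)) (fun hh => ne4 (by linear_combination hh + h2 + ε * hz6)) nsx2
      have hH := C.H1 (x3+5*ε) (x3+2*ε) (hIa.trans hIb.symm)
      rw [ds52] at hH
      have h50 := C.hS0 (x3+5*ε)
      have h20 := C.hS0 (x3+2*ε)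
      rcases abs_cases (C.S (x3+5*ε) - C.S (x3+2*ε)) with ⟨he,_⟩|⟨he,_⟩ <;> rw [he] at hH <;> linarith
    · -- x2 = slot 5
      exact C.subD x3 y3 (x3+4*ε) (x3+2*ε) (x3+5*ε) (x3+3*ε) hIl (by rw [← h2, hIx2, hIx3]) (by rw [← h1, hIx1, hIx3]) (by rw [hIy3]; exact hIw1 _ (fun hh => ne1 (by linear_combination hh + h1)) (fun hh => ne5 (by linear_combination hh + h2 + ε * hz6)) nsx4) (by rw [hIy3]; exact hIw1 _ (fun hh => ne5 (by linear_combination hh + h1 + ε * hz6)) (fun hh => ne3 (by linear_combination hh + h2 + ε * hz6)) nsx2) dxr3 dxr5 ds53 dyr4 dyr2 ds42 dxy es4 es2 es5 es3 ha hb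
  · -- x1 = slot 4
    rcases hcov x2 with h2|h2|h2|h2|h2|h2
    · exact nx32 h2.symm
    · exact cr hIx2 hIy3 h2
    · -- x2 = slot 2
      exact C.subC x3 y3 (x3+4*ε) (x3+2*ε) (x3+5*ε) (x3+3*ε) hIl (by rw [← h1, hIx1, hIx3]) (by rw [← h2, hIx2, hIx3]) (by rw [hIy3]; exact hIw1 _ (fun hh => ne1 (by linear_combination hh + h1)) (fun hh => ne3 (by linear_combination hh + h2)) nsx5) (by rw [hIy3]; exact hIw1 _ (fun hh => ne5 (by linear_combination hh + h1 + ε * hz6)) (fun hh => ne1 (by linear_combination hh + h2)) nsx3) dxr4 dxr2 ds42 dyr5 dyr3 ds53 dxy es4 es2 es5 es3 ha hb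
    · -- x2 = slot 3
      have hIa : C.I (x3+5*ε) = 1 := hIw1 _ (fun hh => ne1 (by linear_combination hh + h1)) (fun hh => ne2 (by linear_combination hh + h2)) nsx5
      have hIb : C.I (x3+2*ε) = 1 := hIw1 _ (fun hh => ne4 (by linear_combination hh + h1 + ε * hz6)) (fun hh => ne5 (by linear_combination hh + h2 + ε * hz6)) nsx2
      have hH := C.H1 (x3+5*ε) (x3+2*ε) (hIa.trans hIb.symm)
      rw [ds52] at hH
      have h50 := C.hS0 (x3+5*ε)
      have h20 := C.hS0 (x3+2*ε)
      rcases abs_cases (C.S (x3+5*ε) - C.S (x3+2*ε)) with ⟨he,_⟩|⟨he,_⟩ <;> rw [he] at hH <;> linarith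
    · exact nx21 (h2.trans h1.symm)
    · -- x2 = slot 5
      exact C.subA x3 y3 (x3+4*ε) (x3+5*ε) (x3+2*ε) (x3+3*ε) hIl (by rw [← h1, hIx1, hIx3]) (by rw [← h2, hIx2, hIx3]) (by rw [hIy3]; exact hIw1 _ (fun hh => ne4 (by linear_combination hh + h1 + ε * hz6)) (fun hh => ne3 (by linear_combination hh + h2 + ε * hz6)) nsx2) (by rw [hIy3]; exact hIw1 _ (fun hh => ne5 (by linear_combination hh + h1 + ε * hz6)) (fun hh => ne4 (by linear_combination hh + h2 + ε * hz6)) nsx3) ng54 ng01 dyx dxy dx3 dx2 dy4 dy5 ha hb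
  · -- x1 = slot 5
    rcases hcov x2 with h2|h2|h2|h2|h2|h2
    · exact nx32 h2.symm
    · exact cr hIx2 hIy3 h2
    · -- x2 = slot 2
      have hdd : dd (x2 - x1) = 2 := by
        rw [h2, h1, show (x3+2*ε) - (x3+5*ε) = 3*ε by linear_combination - ε * hz6]; exact dde3
      have hH := C.H1 x2 x1 (hIx2.trans hIx1.symm)
      rw [hdd, abs_of_nonneg (by linarith)] at hH
      linarith
    · -- x2 = slot 3
      exact C.subD x3 y3 (x3+4*ε) (x3+2*ε) (x3+5*ε) (x3+3*ε) hIl (by rw [← h1, hIx1, hIx3]) (by rw [← h2, hIx2, hIx3]) (by rw [hIy3]; exact hIw1 _ (fun hh => ne5 (by linear_combination hh + h1 + ε * hz6)) (fun hh => ne1 (by linear_combination hh + h2)) nsx4) (by rw [hIy3]; exact hIw1 _ (fun hh => ne3 (by linear_combination hh + h1 + ε * hz6)) (fun hh => ne5 (by linear_combination hh + h2 + ε * hz6)) nsx2) dxr3 dxr5 ds53 dyr4 dyr2 ds42 dxy es4 es2 es5 es3 ha hb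
    · -- x2 = slot 4
      exact C.subA x3 y3 (x3+4*ε) (x3+5*ε) (x3+2*ε) (x3+3*ε) hIl (by rw [← h2, hIx2, hIx3]) (by rw [← h1, hIx1, hIx3]) (by rw [hIy3]; exact hIw1 _ (fun hh => ne3 (by linear_combination hh + h1 + ε * hz6)) (fun hh => ne4 (by linear_combination hh + h2 + ε * hz6)) nsx2) (by rw [hIy3]; exact hIw1 _ (fun hh => ne4 (by linear_combination hh + h1 + ε * hz6)) (fun hh => ne5 (by linear_combination hh + h2 + ε * hz6)) nsx3) ng54 ng01 dyx dxy dx3 dx2 dy4 dy5 ha hb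
    · exact nx21 (h2.trans h1.symm)


end Ctx
namespace Ctx
variable (C : Ctx)

lemma cap (A : Fin 2) (hA : 5 ≤ (Finset.univ.filter (fun e => C.I e = A)).card) : False := by
  classical
  have s3u := s3_ub
  set s : Finset (ZMod 6) := Finset.univ.filter (fun e => C.I e = A) with hs
  have hmem : ∀ e, e ∈ s ↔ C.I e = A := by intro e; simp [hs]
  obtain ⟨x1, hx1, hmin1, hc1⟩ := peel s C.S (by omega)
  obtain ⟨x2, hx2, hmin2, hc2⟩ := peel (s.erase x1) C.S (by omega)
  obtain ⟨x3, hx3, hmin3, hc3⟩ := peel ((s.erase x1).erase x2) C.S (by omega)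
  obtain ⟨x4, hx4, hmin4, hc4⟩ := peel (((s.erase x1).erase x2).erase x3) C.S (by omega)
  obtain ⟨x5, hx5, hmin5, hc5⟩ := peel ((((s.erase x1).erase x2).erase x3).erase x4) C.S (by omega)
  have hx2s : x2 ∈ s := Finset.mem_of_mem_erase hx2
  have hx3s' : x3 ∈ s.erase x1 := Finset.mem_of_mem_erase hx3
  have hx3s : x3 ∈ s := Finset.mem_of_mem_erase hx3s'
  have hx4s'' : x4 ∈ (s.erase x1).erase x2 := Finset.mem_of_mem_erase hx4
  have hx4s' : x4 ∈ s.erase x1 := Finset.mem_of_mem_erase hx4s''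
  have hx4s : x4 ∈ s := Finset.mem_of_mem_erase hx4s'
  have hx5a : x5 ∈ ((s.erase x1).erase x2).erase x3 := Finset.mem_of_mem_erase hx5
  have hx5b : x5 ∈ (s.erase x1).erase x2 := Finset.mem_of_mem_erase hx5a
  have n21 : x2 ≠ x1 := Finset.ne_of_mem_erase hx2
  have n32 : x3 ≠ x2 := Finset.ne_of_mem_erase hx3
  have n43 : x4 ≠ x3 := Finset.ne_of_mem_erase hx4
  have n54 : x5 ≠ x4 := Finset.ne_of_mem_erase hx5
  have o12 : C.S x1 ≤ C.S x2 := hmin1 x2 hx2s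
  have o23 : C.S x2 ≤ C.S x3 := hmin2 x3 hx3s'
  have o34 : C.S x3 ≤ C.S x4 := hmin3 x4 hx4s''
  have o45 : C.S x4 ≤ C.S x5 := hmin4 x5 hx5a
  have hIA : ∀ {w}, w ∈ s → C.I w = A := fun hw => (hmem _).mp hw
  have g1 : (1:ℝ) ≤ C.S x2 - C.S x1 := by
    have := C.H1 x2 x1 ((hIA hx2s).trans (hIA hx1).symm)
    have hl := dd_one_le (x2 - x1) (sub_ne_zero.mpr n21)
    rw [abs_of_nonneg (by linarith)] at this; linarith
  have g2 : (1:ℝ) ≤ C.S x3 - C.S x2 := by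
    have := C.H1 x3 x2 ((hIA hx3s).trans (hIA hx2s).symm)
    have hl := dd_one_le (x3 - x2) (sub_ne_zero.mpr n32)
    rw [abs_of_nonneg (by linarith)] at this; linarith
  have g3 : (1:ℝ) ≤ C.S x4 - C.S x3 := by
    have := C.H1 x4 x3 ((hIA hx4s).trans (hIA hx3s).symm)
    have hl := dd_one_le (x4 - x3) (sub_ne_zero.mpr n43)
    rw [abs_of_nonneg (by linarith)] at this; linarith
  have g4 : (1:ℝ) ≤ C.S x5 - C.S x4 := by
    have hx5s : x5 ∈ s :=
      Finset.mem_of_mem_erase (Finset.mem_of_mem_erase hx5b)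
    have := C.H1 x5 x4 ((hIA hx5s).trans (hIA hx4s).symm)
    have hl := dd_one_le (x5 - x4) (sub_ne_zero.mpr n54)
    rw [abs_of_nonneg (by linarith)] at this; linarith
  have h0 := C.hS0 x1
  have hc := C.hSc x5
  linarith

lemma false' (C : Ctx) : False := by
  classical
  have hsum : (Finset.univ.filter (fun e => C.I e = 0)).card
      + (Finset.univ.filter (fun e => C.I e = 1)).card = 6 := by
    have h : (Finset.univ.filter (fun e => C.I e = 1)) =
        (Finset.univ.filter (fun e => ¬ C.I e = 0)) := by
      apply Finset.ext; intro a
      simp only [Finset.mem_filter, Finset.mem_univ, true_and]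
      constructor
      · intro h h0; rw [h0] at h; exact absurd h (by decide)
      · intro h; exact (show ∀ a : Fin 2, ¬ a = 0 → a = 1 by decide) _ h
    rw [h, Finset.card_filter_add_card_filter_not]
    simp
  have h40 : (Finset.univ.filter (fun e => C.I e = 0)).card ≤ 4 := by
    by_contra h; exact C.cap 0 (by omega)
  have h41 : (Finset.univ.filter (fun e => C.I e = 1)).card ≤ 4 := by
    by_contra h; exact C.cap 1 (by omega)
  have hcases : (Finset.univ.filter (fun e => C.I e = 0)).card = 2 ∨
      (Finset.univ.filter (fun e => C.I e = 0)).card = 3 ∨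
      (Finset.univ.filter (fun e => C.I e = 0)).card = 4 := by omega
  rcases hcases with h | h | h
  · exact C.caseI 1 (by omega)
  · exact C.case33 h (by omega)
  · exact C.caseI 0 h

end Ctx


/-- Any deterministic face-to-face evacuation algorithm on the hexagon
has worst-case evacuation time at least `2 + √3`. -/
theorem hex_evacuation_lower_bound (algo : HexEvacAlgo) :
    ∃ e : ZMod 6, ∀ T : ℝ, 0 ≤ T →
      (∀ i : Fin 2, algo.traj e i T = hexVertex e) → 2 + Real.sqrt 3 ≤ T := by
  by_contra hcon
  push_neg at hcon
  have hlipb : ∀ i s t, dist (algo.base i s) (algo.base i t) ≤ |s - t| := by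
    intro i s t
    have := (algo.lip_base i).dist_le_mul s t
    simpa [Real.dist_eq] using this
  have hlipt : ∀ e i s t, dist (algo.traj e i s) (algo.traj e i t) ≤ |s - t| := by
    intro e i s t
    have := (algo.lip_traj e i).dist_le_mul s t
    simpa [Real.dist_eq] using this
  have hGood : ∀ e : ZMod 6, ∃ i j : Fin 2, i ≠ j ∧ ∃ s τ : ℝ, 0 ≤ s ∧
      algo.base i s = hexVertex e ∧
      dist (algo.base j τ) (hexVertex e) ≤ τ - s ∧
      τ + dist (algo.base j τ) (hexVertex e) < 2 + Real.sqrt 3 := by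
    intro e
    obtain ⟨T, hT0, hTe, hTc⟩ := hcon e
    have key : ∀ i j : Fin 2, i ≠ j → algo.informedAt e i ≤ algo.informedAt e j →
        ∃ i j : Fin 2, i ≠ j ∧ ∃ s τ : ℝ, 0 ≤ s ∧
        algo.base i s = hexVertex e ∧
        dist (algo.base j τ) (hexVertex e) ≤ τ - s ∧
        τ + dist (algo.base j τ) (hexVertex e) < 2 + Real.sqrt 3 := by
      intro i j hij hmin
      have hbi : algo.base i (algo.informedAt e i) = hexVertex e := by
        rcases algo.informed_reason e i with hr | ⟨j', hj', hlt, _⟩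
        · rw [← algo.agree_before e i (algo.informedAt e i) le_rfl]; exact hr
        · have hj'j : j' = j := fin2_resolve hj' (fun h => hij h.symm)
          rw [hj'j] at hlt; linarith
      rcases le_or_gt T (algo.informedAt e j) with hTj | hTj
      · have hbjT : algo.base j T = hexVertex e := by
          rw [← algo.agree_before e j T hTj]; exact hTe j
        rcases le_or_gt T (algo.informedAt e i) with hTi | hTi
        · have hbiT : algo.base i T = hexVertex e := by
            rw [← algo.agree_before e i T hTi]; exact hTe i
          exact ⟨i, j, hij, T, T, hT0, hbiT,
            by rw [hbjT, dist_self]; linarith, by rw [hbjT, dist_self]; linarith⟩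
        · exact ⟨i, j, hij, algo.informedAt e i, T, algo.informed_nonneg e i, hbi,
            by rw [hbjT, dist_self]; linarith, by rw [hbjT, dist_self]; linarith⟩
      · rcases algo.informed_reason e j with hr | ⟨i', hi', hlt, hmeet⟩
        · have hbj : algo.base j (algo.informedAt e j) = hexVertex e := by
            rw [← algo.agree_before e j (algo.informedAt e j) le_rfl]; exact hr
          exact ⟨i, j, hij, algo.informedAt e i, algo.informedAt e j,
            algo.informed_nonneg e i, hbi,
            by rw [hbj, dist_self]; linarith, by rw [hbj, dist_self]; linarith⟩
        · have hi'i : i' = i := fin2_resolve hi' hij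
          rw [hi'i] at hlt hmeet
          have hpj : algo.traj e j (algo.informedAt e j) = algo.base j (algo.informedAt e j) :=
            algo.agree_before e j (algo.informedAt e j) le_rfl
          have h1 : dist (algo.base j (algo.informedAt e j)) (hexVertex e)
              ≤ algo.informedAt e j - algo.informedAt e i := by
            have hh := hlipt e i (algo.informedAt e j) (algo.informedAt e i)
            rw [hmeet, hpj] at hh
            have hti : algo.traj e i (algo.informedAt e i) = hexVertex e := by
              rw [algo.agree_before e i (algo.informedAt e i) le_rfl]; exact hbi
            rw [hti] at hh
            rwa [abs_of_nonneg (by linarith)] at hh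
          have h2 : dist (algo.base j (algo.informedAt e j)) (hexVertex e)
              ≤ T - algo.informedAt e j := by
            have hh := hlipt e j (algo.informedAt e j) T
            rw [hpj, hTe j] at hh
            rwa [abs_of_nonpos (by linarith), neg_sub] at hh
          exact ⟨i, j, hij, algo.informedAt e i, algo.informedAt e j,
            algo.informed_nonneg e i, hbi, h1, by linarith⟩
    rcases le_total (algo.informedAt e 0) (algo.informedAt e 1) with h | h
    · exact key 0 1 (by decide) h
    · exact key 1 0 (by decide) h
  choose I J hIJ S T hS0 hbase hD1 hD2 using hGood
  exact Ctx.false' ⟨algo.base, algo.start, I, J, S, T,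
    fun e => hIJ e, hS0, hbase, hD1, hD2, hlipb, algo.base_start⟩

-- #print axioms check (removed)
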